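/- (From Lemma B.2) Let l ≥ 1 and let a₁,…,a_{2l} ∈ ℂ satisfy a_j + a_k ≠ 0 for all j, k ∈ {1,…,2l}. Let 𝒜 be the antisymmetric 2l × 2l matrix with entries 𝒜_{jk} = (a_j − a_k)/(a_j + a_k). Then det(𝒜) = ∏_{1 ≤ j < k ≤ 2l} ((a_j − a_k)/(a_j + a_k))². -/

import Mathlib

open Finset


lemma prod_filter_lt_castSucc {n : ℕ} (j : Fin n) (f : Fin (n+1) → ℂ) :
    ∏ i ∈ Finset.univ.filter (fun i => i < j.castSucc), f i
      = ∏ i ∈ Finset.univ.filter (fun i => i < j), f (Fin.castSucc i) := by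
  refine (Finset.prod_bij (fun i _ => Fin.castSucc i) ?_ ?_ ?_ ?_).symm
  · intro a ha; simp only [mem_filter, mem_univ, true_and, Fin.lt_def] at ha ⊢
    simpa using ha
  · intro a _ b _ hab; exact Fin.castSucc_injective _ hab
  · intro b hb; simp only [mem_filter, mem_univ, true_and, Fin.lt_def, Fin.coe_castSucc] at hb
    have hbn : b.1 < n := by omega
    exact ⟨⟨b.1, hbn⟩, by simp only [mem_filter, mem_univ, true_and, Fin.lt_def, Fin.coe_castSucc]; omega, by ext; simp⟩
  · intro a _; rfl

lemma prod_filter_lt_last {n : ℕ} (f : Fin (n+1) → ℂ) :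
    ∏ i ∈ Finset.univ.filter (fun i => i < Fin.last n), f i
      = ∏ i : Fin n, f (Fin.castSucc i) := by
  refine (Finset.prod_bij (fun i _ => Fin.castSucc i) ?_ ?_ ?_ ?_).symm
  · intro a _; simp only [mem_filter, mem_univ, true_and, Fin.lt_def, Fin.val_last]
    simpa using a.2
  · intro a _ b _ hab; exact Fin.castSucc_injective _ hab
  · intro b hb; simp only [mem_filter, mem_univ, true_and, Fin.lt_def, Fin.val_last] at hb
    exact ⟨⟨b.1, hb⟩, mem_univ _, by ext; simp⟩
  · intro a _; rfl

theorem cauchy_det (n : ℕ) (x y : Fin n → ℂ) (h : ∀ i j, x i + y j ≠ 0) :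
    (Matrix.of fun i j => (x i + y j)⁻¹).det
      = (∏ j, ∏ i ∈ Finset.univ.filter (fun i => i < j), ((x j - x i) * (y j - y i)))
        / ∏ i, ∏ j, (x i + y j) := by
  induction n with
  | zero => simp
  | succ n ih =>
    set ℓ : Fin (n+1) := Fin.last n with hℓ
    -- the intermediate matrices
    set M1 : Matrix (Fin (n+1)) (Fin (n+1)) ℂ := Matrix.of fun i j =>
      if i = ℓ then (x ℓ + y j)⁻¹
      else (x ℓ - x i) * ((x ℓ + y j)⁻¹ * (x i + y j)⁻¹) with hM1
    set M2 : Matrix (Fin (n+1)) (Fin (n+1)) ℂ := Matrix.of fun i j =>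
      if i = ℓ then (1:ℂ) else (x i + y j)⁻¹ with hM2
    set M3 : Matrix (Fin (n+1)) (Fin (n+1)) ℂ := Matrix.of fun i j =>
      if j = ℓ then (if i = ℓ then (1:ℂ) else (x i + y ℓ)⁻¹)
      else (if i = ℓ then 0 else (y ℓ - y j) * ((x i + y ℓ)⁻¹ * (x i + y j)⁻¹)) with hM3
    set M4 : Matrix (Fin (n+1)) (Fin (n+1)) ℂ := Matrix.of fun i j =>
      if i = ℓ then (if j = ℓ then (1:ℂ) else 0)
      else (if j = ℓ then 1 else (x i + y j)⁻¹) with hM4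
    have h1 : (Matrix.of fun i j => (x i + y j)⁻¹).det = M1.det := by
      apply Matrix.det_eq_of_forall_row_eq_smul_add_const
        (fun i => if i = ℓ then 0 else 1) ℓ (by simp)
      intro i j
      by_cases hi : i = ℓ
      · simp [hi, hM1]
      · simp only [hM1, Matrix.of_apply, if_neg hi, if_pos rfl, eq_self_iff_true, if_true]
        have h1 := h i j; have h2 := h ℓ j
        field_simp
        ring
    have h2 : M1.det = (∏ i : Fin (n+1), (if i = ℓ then 1 else x ℓ - x i))
        * ((∏ j : Fin (n+1), (x ℓ + y j)⁻¹) * M2.det) := by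
      have : M1 = Matrix.of fun i j => (if i = ℓ then 1 else x ℓ - x i) *
          ((x ℓ + y j)⁻¹ * M2 i j) := by
        ext i j
        by_cases hi : i = ℓ <;> simp [hM1, hM2, hi]
      rw [this]; refine (Matrix.det_mul_column _ (Matrix.of fun i j => (x ℓ + y j)⁻¹ * M2 i j)).trans ?_
      congr 1
      exact Matrix.det_mul_row _ _
    have h3 : M2.det = M3.det := by
      rw [← Matrix.det_transpose M2, ← Matrix.det_transpose M3]
      apply Matrix.det_eq_of_forall_row_eq_smul_add_const
        (fun j => if j = ℓ then 0 else 1) ℓ (by simp)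
      intro j i
      simp only [Matrix.transpose_apply]
      by_cases hj : j = ℓ
      · simp [hj, hM2, hM3]
      · by_cases hi : i = ℓ
        · simp [hi, hj, hM2, hM3]
        · simp only [hM2, hM3, Matrix.of_apply, if_neg hi, if_neg hj, if_pos rfl, eq_self_iff_true, if_true]
          have h1 := h i j; have h2 := h i ℓ
          field_simp
          ring
    have h4 : M3.det = (∏ i : Fin (n+1), (if i = ℓ then 1 else (x i + y ℓ)⁻¹))
        * ((∏ j : Fin (n+1), (if j = ℓ then 1 else y ℓ - y j)) * M4.det) := by
      have : M3 = Matrix.of fun i j => (if i = ℓ then 1 else (x i + y ℓ)⁻¹) *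
          ((if j = ℓ then 1 else y ℓ - y j) * M4 i j) := by
        ext i j
        by_cases hi : i = ℓ <;> by_cases hj : j = ℓ <;> simp [hM3, hM4, hi, hj] <;> ring
      rw [this]; refine (Matrix.det_mul_column _ (Matrix.of fun i j => (if j = ℓ then 1 else y ℓ - y j) * M4 i j)).trans ?_
      congr 1
      exact Matrix.det_mul_row _ _
    have h5 : M4.det = (Matrix.of fun (i j : Fin n) =>
        (x i.castSucc + y j.castSucc)⁻¹).det := by
      rw [Matrix.det_succ_row M4 ℓ]
      rw [Finset.sum_eq_single ℓ]
      · have hsub : M4.submatrix ℓ.succAbove ℓ.succAbove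
            = Matrix.of fun (i j : Fin n) => (x i.castSucc + y j.castSucc)⁻¹ := by
          ext i j
          simp only [Matrix.submatrix_apply, hℓ, Fin.succAbove_last, hM4, Matrix.of_apply,
            if_neg (Fin.castSucc_lt_last i).ne, if_neg (Fin.castSucc_lt_last j).ne]
        rw [hsub]
        have : M4 ℓ ℓ = 1 := by simp [hM4]
        rw [this]
        have : (-1 : ℂ) ^ ((ℓ : ℕ) + (ℓ : ℕ)) = 1 := by
          rw [← two_mul, pow_mul]; norm_num
        rw [this, one_mul, one_mul]
      · intro j _ hj
        have : M4 ℓ j = 0 := by simp [hM4, hj]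
        rw [this]; ring
      · intro hℓ'; exact absurd (Finset.mem_univ ℓ) hℓ'
    -- auxiliary product computations
    have hprod1 : (∏ i : Fin (n+1), (if i = ℓ then 1 else x ℓ - x i))
        = ∏ i : Fin n, (x ℓ - x i.castSucc) := by
      rw [Fin.prod_univ_castSucc]
      simp [hℓ, fun i : Fin n => (Fin.castSucc_lt_last i).ne]
    have hprod2 : (∏ i : Fin (n+1), (if i = ℓ then 1 else (x i + y ℓ)⁻¹))
        = (∏ i : Fin n, (x i.castSucc + y ℓ))⁻¹ := by
      rw [Fin.prod_univ_castSucc, ← Finset.prod_inv_distrib]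
      simp [hℓ, fun i : Fin n => (Fin.castSucc_lt_last i).ne]
    have hprod3 : (∏ j : Fin (n+1), (if j = ℓ then 1 else y ℓ - y j))
        = ∏ j : Fin n, (y ℓ - y j.castSucc) := by
      rw [Fin.prod_univ_castSucc]
      simp [hℓ, fun i : Fin n => (Fin.castSucc_lt_last i).ne]
    have hprod4 : (∏ j : Fin (n+1), (x ℓ + y j)⁻¹)
        = (∏ j : Fin (n+1), (x ℓ + y j))⁻¹ := by
      rw [← Finset.prod_inv_distrib]
    -- numerator split
    have hN : (∏ j : Fin (n+1), ∏ i ∈ Finset.univ.filter (fun i => i < j),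
          ((x j - x i) * (y j - y i)))
        = (∏ j : Fin n, ∏ i ∈ Finset.univ.filter (fun i => i < j),
            ((x j.castSucc - x i.castSucc) * (y j.castSucc - y i.castSucc)))
          * ((∏ i : Fin n, (x ℓ - x i.castSucc)) * ∏ i : Fin n, (y ℓ - y i.castSucc)) := by
      rw [Fin.prod_univ_castSucc]
      congr 1
      · exact Finset.prod_congr rfl fun j _ => prod_filter_lt_castSucc j _
      · rw [prod_filter_lt_last (fun i => (x ℓ - x i) * (y ℓ - y i)),
          Finset.prod_mul_distrib]
    -- denominator split
    have hD : (∏ i : Fin (n+1), ∏ j : Fin (n+1), (x i + y j))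
        = (∏ i : Fin n, ∏ j : Fin n, (x i.castSucc + y j.castSucc))
          * (∏ i : Fin n, (x i.castSucc + y ℓ)) * ∏ j : Fin (n+1), (x ℓ + y j) := by
      rw [Fin.prod_univ_castSucc]
      congr 1
      rw [← Finset.prod_mul_distrib]
      exact Finset.prod_congr rfl fun i _ => by rw [Fin.prod_univ_castSucc]
    have hih := ih (fun i => x i.castSucc) (fun j => y j.castSucc) (fun i j => h _ _)
    rw [h1, h2, h3, h4, h5, hih, hprod1, hprod2, hprod3, hprod4, hN, hD]
    have hP1 : (∏ j : Fin (n+1), (x ℓ + y j)) ≠ 0 :=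
      Finset.prod_ne_zero_iff.mpr fun j _ => h ℓ j
    have hP2 : (∏ i : Fin n, (x i.castSucc + y ℓ)) ≠ 0 :=
      Finset.prod_ne_zero_iff.mpr fun i _ => h _ _
    have hD' : (∏ i : Fin n, ∏ j : Fin n, (x i.castSucc + y j.castSucc)) ≠ 0 :=
      Finset.prod_ne_zero_iff.mpr fun i _ => Finset.prod_ne_zero_iff.mpr fun j _ => h _ _
    field_simp

/-- Lemma B.2 in determinant form: for the antisymmetric matrix
𝒜_{jk} = (a_j − a_k)/(a_j + a_k) of even size 2l,
det 𝒜 = ∏_{j<k} ((a_j − a_k)/(a_j + a_k))². -/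
theorem det_antisymm_cauchy (l : ℕ) (hl : 1 ≤ l) (a : Fin (2 * l) → ℂ)
    (hsum : ∀ j k, a j + a k ≠ 0) :
    (Matrix.of (fun j k : Fin (2 * l) => (a j - a k) / (a j + a k))).det
      = ∏ j : Fin (2 * l), ∏ k ∈ Finset.univ.filter (fun k => j < k),
          ((a j - a k) / (a j + a k)) ^ 2 := by
  -- swap the right-hand side into "∏ over k of ∏ over smaller j" form
  have hswap : ∀ f : Fin (2*l) → Fin (2*l) → ℂ,
      (∏ j : Fin (2 * l), ∏ k ∈ Finset.univ.filter (fun k => j < k), f j k)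
        = ∏ k : Fin (2 * l), ∏ j ∈ Finset.univ.filter (fun j => j < k), f j k := by
    intro f
    exact Finset.prod_comm' (fun x y => by simp)
  by_cases hinj : Function.Injective a
  · -- nondegenerate case
    have ha0 : ∀ j, a j ≠ 0 := by
      intro j hj
      exact hsum j j (by rw [hj]; ring)
    set C : Matrix (Fin (2*l)) (Fin (2*l)) ℂ := Matrix.of fun j k => (a j + a k)⁻¹ with hC
    set B : Matrix (Fin (2*l)) (Fin (2*l)) ℂ :=
      Matrix.of fun j k => (2 * a k) * (a j + a k)⁻¹ with hB
    set N : ℂ := ∏ j : Fin (2*l), ∏ i ∈ Finset.univ.filter (fun i => i < j),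
      ((a j - a i) * (a j - a i)) with hN
    set P : ℂ := ∏ j : Fin (2*l), ∏ i ∈ Finset.univ.filter (fun i => i < j),
      (a j + a i) with hP
    set Q : ℂ := ∏ k : Fin (2*l), (2 * a k) with hQ
    have hP_ne : P ≠ 0 := Finset.prod_ne_zero_iff.mpr fun j _ =>
      Finset.prod_ne_zero_iff.mpr fun i _ => hsum j i
    have hQ_ne : Q ≠ 0 := Finset.prod_ne_zero_iff.mpr fun k _ =>
      mul_ne_zero two_ne_zero (ha0 k)
    have hN_ne : N ≠ 0 := Finset.prod_ne_zero_iff.mpr fun j _ =>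
      Finset.prod_ne_zero_iff.mpr fun i hi => by
        rw [Finset.mem_filter] at hi
        have : a j ≠ a i := fun e => (ne_of_lt hi.2).symm (hinj e)
        exact mul_ne_zero (sub_ne_zero.mpr this) (sub_ne_zero.mpr this)
    -- denominator of the Cauchy formula splits as P * (Q * P)
    have hsplit : ∀ i : Fin (2*l), (∏ j, (a i + a j))
        = (∏ j ∈ Finset.univ.filter (fun j => j < i), (a i + a j)) *
          ((2 * a i) * ∏ j ∈ Finset.univ.filter (fun j => i < j), (a i + a j)) := by
      intro i
      rw [← Finset.prod_filter_mul_prod_filter_not Finset.univ (fun j => j < i)]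
      congr 1
      have hset : Finset.univ.filter (fun j => ¬ j < i)
          = insert i (Finset.univ.filter (fun j => i < j)) := by
        ext j
        simp only [mem_filter, mem_univ, true_and, mem_insert, not_lt]
        constructor
        · intro hj
          rcases eq_or_lt_of_le hj with h' | h'
          · exact Or.inl h'.symm
          · exact Or.inr h'
        · rintro (rfl | hj)
          · exact le_refl _
          · exact le_of_lt hj
      rw [hset, Finset.prod_insert (by simp)]
      congr 1
      ring
    have hPup : (∏ i : Fin (2*l), ∏ j ∈ Finset.univ.filter (fun j => i < j), (a i + a j))
        = P := by
      rw [Finset.prod_comm' (s := Finset.univ) (t := fun i => Finset.univ.filter (fun j => i < j))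
        (t' := Finset.univ) (s' := fun j => Finset.univ.filter (fun i => i < j))
        (fun x y => by simp)]
      rw [hP]
      exact Finset.prod_congr rfl fun j _ => Finset.prod_congr rfl fun i _ => add_comm _ _
    have hPlow : (∏ i : Fin (2*l), ∏ j ∈ Finset.univ.filter (fun j => j < i), (a i + a j))
        = P := rfl
    have hDc : (∏ i : Fin (2*l), ∏ j, (a i + a j)) = P * (Q * P) := by
      calc (∏ i : Fin (2*l), ∏ j, (a i + a j))
          = ∏ i : Fin (2*l), ((∏ j ∈ Finset.univ.filter (fun j => j < i), (a i + a j)) *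
            ((2 * a i) * ∏ j ∈ Finset.univ.filter (fun j => i < j), (a i + a j))) :=
            Finset.prod_congr rfl fun i _ => hsplit i
        _ = P * (Q * P) := by
            rw [Finset.prod_mul_distrib, Finset.prod_mul_distrib, hPlow, hPup]
    have hdetC : C.det = N / (P * (Q * P)) := by
      rw [hC]
      rw [cauchy_det (2*l) a a hsum, hDc]
    have hdetB : B.det = Q * C.det := by
      have : B = Matrix.of fun i j => (2 * a j) * C i j := rfl
      rw [this, Matrix.det_mul_row]
    have hdetB_ne : B.det ≠ 0 := by
      rw [hdetB, hdetC]
      exact mul_ne_zero hQ_ne (div_ne_zero hN_ne (mul_ne_zero hP_ne (mul_ne_zero hQ_ne hP_ne)))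
    have hBu : IsUnit B.det := isUnit_iff_ne_zero.mpr hdetB_ne
    set s : ℂ := ∑ k : Fin (2*l), ∑ j : Fin (2*l), B⁻¹ j k with hs
    have key : ∀ c : ℂ, (Matrix.of fun j k => B j k + c).det = B.det * (1 + c * s) := by
      intro c
      have hmat : (Matrix.of fun j k => B j k + c)
          = B + Matrix.replicateCol (Fin 1) (fun _ => c) * Matrix.replicateRow (Fin 1) (fun _ => (1:ℂ)) := by
        ext j k
        simp [Matrix.mul_apply, Matrix.add_apply]
      rw [hmat]; refine (Matrix.det_add_replicateCol_mul_replicateRow (ι := Fin 1) hBu _ _).trans ?_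
      congr 1
      have hdet1 : ∀ (i2 : DecidableEq (Fin 1)) (i1 : Fintype (Fin 1))
          (M : Matrix (Fin 1) (Fin 1) ℂ), @Matrix.det (Fin 1) i2 i1 ℂ _ M = M 0 0 := by
        intro i2 i1 M
        rw [Subsingleton.elim i2 (instDecidableEqFin 1), Subsingleton.elim i1 (Fin.fintype 1)]
        exact Matrix.det_fin_one M
      rw [hdet1]
      simp only [Matrix.add_apply, Matrix.one_apply_eq, Matrix.mul_apply, Matrix.replicateRow_apply,
        Matrix.replicateCol_apply, Fintype.sum_unique, one_mul]
      rw [hs, Finset.mul_sum]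
      congr 1
      refine Finset.sum_congr rfl fun k _ => ?_
      rw [Finset.mul_sum, Finset.sum_mul]
      exact Finset.sum_congr rfl fun j _ => by ring
    have hBt : ∀ j k, B k j = 2 - B j k := by
      intro j k
      rw [hB]
      simp only [Matrix.of_apply]
      have h1 := hsum j k
      have h2 : a k + a j ≠ 0 := by rw [add_comm]; exact h1
      field_simp
      ring
    have hcard : (-1 : ℂ) ^ Fintype.card (Fin (2*l)) = 1 := by
      rw [Fintype.card_fin, pow_mul, neg_one_sq, one_pow]
    have e2 : (Matrix.of fun j k => B j k + (-2:ℂ)).det = B.det := by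
      have ht : (Matrix.of fun (j k : Fin (2*l)) => B j k + (-2:ℂ)).transpose = -B := by
        ext j k
        simp only [Matrix.transpose_apply, Matrix.of_apply, Matrix.neg_apply]
        rw [hBt k j]
        ring
      rw [← Matrix.det_transpose, ht, Matrix.det_neg, hcard, one_mul]
    have hs0 : s = 0 := by
      have h1' : B.det * 1 = B.det * (1 + (-2) * s) := by
        rw [mul_one, ← key (-2), e2]
      have := mul_left_cancel₀ hdetB_ne h1'
      linear_combination ((1:ℂ)/2) * this
    have hdetA : (Matrix.of (fun j k : Fin (2 * l) => (a j - a k) / (a j + a k))).det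
        = B.det := by
      have hAeq : (Matrix.of (fun j k : Fin (2 * l) => (a j - a k) / (a j + a k)))
          = -(Matrix.of fun j k => B j k + (-1:ℂ)) := by
        ext j k
        simp only [Matrix.of_apply, Matrix.neg_apply, hB]
        have h1 := hsum j k
        field_simp
        ring
      rw [hAeq, Matrix.det_neg, hcard, one_mul, key (-1), hs0]
      ring
    rw [hdetA, hdetB, hdetC, hswap]
    have hRHS : (∏ k : Fin (2*l), ∏ j ∈ Finset.univ.filter (fun j => j < k),
        ((a j - a k) / (a j + a k)) ^ 2) = N / P ^ 2 := by
      have : ∀ k : Fin (2*l), ∀ j, ((a j - a k) / (a j + a k)) ^ 2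
          = ((a k - a j) * (a k - a j)) / ((a k + a j) * (a k + a j)) := by
        intro k j
        rw [div_pow]
        congr 1 <;> ring
      calc (∏ k : Fin (2*l), ∏ j ∈ Finset.univ.filter (fun j => j < k),
            ((a j - a k) / (a j + a k)) ^ 2)
          = ∏ k : Fin (2*l), ∏ j ∈ Finset.univ.filter (fun j => j < k),
            (((a k - a j) * (a k - a j)) / ((a k + a j) * (a k + a j))) :=
            Finset.prod_congr rfl fun k _ => Finset.prod_congr rfl fun j _ => this k j
        _ = (∏ k : Fin (2*l), ∏ j ∈ Finset.univ.filter (fun j => j < k),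
              ((a k - a j) * (a k - a j)))
            / (∏ k : Fin (2*l), ∏ j ∈ Finset.univ.filter (fun j => j < k),
              ((a k + a j) * (a k + a j))) := by
            rw [← Finset.prod_div_distrib]
            exact Finset.prod_congr rfl fun k _ => by rw [← Finset.prod_div_distrib]
        _ = N / P ^ 2 := by
            congr 1
            rw [hP, ← Finset.prod_pow]
            refine Finset.prod_congr rfl fun k _ => ?_
            rw [← Finset.prod_pow]
            exact Finset.prod_congr rfl fun j _ => by ring
    rw [hRHS]
    field_simp
  · -- degenerate case: two equal values make both sides zero
    obtain ⟨j, k, hjk, hne⟩ := Function.not_injective_iff.mp hinj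
    have hL : (Matrix.of (fun j k : Fin (2 * l) => (a j - a k) / (a j + a k))).det = 0 := by
      apply Matrix.det_zero_of_row_eq hne
      funext m
      simp only [Matrix.of_apply, hjk]
    rw [hL]
    rcases lt_or_gt_of_ne hne with hlt | hlt
    · symm
      apply Finset.prod_eq_zero (Finset.mem_univ j)
      apply Finset.prod_eq_zero (Finset.mem_filter.mpr ⟨Finset.mem_univ k, hlt⟩)
      rw [hjk, sub_self, zero_div, zero_pow]
      norm_num
    · symm
      apply Finset.prod_eq_zero (Finset.mem_univ k)
      apply Finset.prod_eq_zero (Finset.mem_filter.mpr ⟨Finset.mem_univ j, hlt⟩)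
      rw [hjk, sub_self, zero_div, zero_pow]
      norm_num
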